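/- Let G' = (P ∪ B, E) be a finite galactic graph with a black hole b ∈ B, and let S, T ⊆ P with |S| = |T| = n and no black hole in N[S ∪ T]. If there is a plan for Galactic 1IUMAPF from S to T in G', then there is a plan Q'_0, …, Q'_{ℓ'} for Galactic 1IUMAPF from S to T in G' such that no two consecutive configurations both have an agent in the open neighborhood N(b); that is, for every t ∈ [0, ℓ'−1], the set of vertices occupied by Q'_t is disjoint from N(b) or the set occupied by Q'_{t+1} is disjoint from N(b). -/

import Mathlib

open SimpleGraph

/-- A configuration of `n` agents is distance-`r` independent if distinct agents are
at graph distance at least `r + 1`. A plan for `rIUMAPF` of length `ℓ` from `S` to `T`: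
the occupied sets at times `0` and `ℓ` are `S` and `T`, every configuration up to time `ℓ`
is distance-`r` independent, and each agent moves within closed neighborhoods. -/
def IsPlan {V : Type*} (G : SimpleGraph V) (r n ℓ : ℕ) (Q : ℕ → Fin n → V)
    (S T : Set V) : Prop :=
  Set.range (Q 0) = S ∧ Set.range (Q ℓ) = T ∧
  (∀ k ≤ ℓ, ∀ i j : Fin n, i ≠ j → r + 1 ≤ G.dist (Q k i) (Q k j)) ∧
  (∀ k < ℓ, ∀ i : Fin n, Q (k + 1) i = Q k i ∨ G.Adj (Q k i) (Q (k + 1) i))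

/-- Galactic distance-`r` independence: no two distinct agents on planets are within
distance `r` in the planet-induced subgraph (`edist = ⊤` when unreachable). -/
def GalIndep {V : Type*} (G : SimpleGraph V) (P : Set V) (r : ℕ) {n : ℕ}
    (Q : Fin n → V) : Prop :=
  ∀ i j : Fin n, i ≠ j → ∀ (hi : Q i ∈ P) (hj : Q j ∈ P),
    (r : ℕ∞) < (G.induce P).edist ⟨Q i, hi⟩ ⟨Q j, hj⟩

/-- A plan for Galactic `rIUMAPF` from `S` to `T`. -/
def GalPlan {V : Type*} (G : SimpleGraph V) (P : Set V) (r n : ℕ)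
    (S T : Set V) : Prop :=
  ∃ (ℓ : ℕ) (Q : ℕ → Fin n → V),
    Set.range (Q 0) = S ∧ Set.range (Q ℓ) = T ∧
    (∀ k ≤ ℓ, GalIndep G P r (Q k)) ∧
    (∀ k < ℓ, ∀ i : Fin n, Q (k + 1) i = Q k i ∨ G.Adj (Q k i) (Q (k + 1) i))

/-- Closed neighborhood `N[X]` of a set of vertices. -/
def nclSet {V : Type*} (G : SimpleGraph V) (X : Set V) : Set V :=
  X ∪ {v | ∃ u ∈ X, G.Adj u v}

/-- Contraction of a vertex set `W` to a single new vertex (`Sum.inr ()`), which is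
adjacent exactly to the vertices of `N(W) ∖ W`; everything else is unchanged. -/
def contractSet {V : Type*} (G : SimpleGraph V) (W : Set V) :
    SimpleGraph ({v : V // v ∉ W} ⊕ Unit) where
  Adj x y :=
    match x, y with
    | Sum.inl u, Sum.inl v => G.Adj u.1 v.1
    | Sum.inl u, Sum.inr _ => ∃ w ∈ W, G.Adj u.1 w
    | Sum.inr _, Sum.inl v => ∃ w ∈ W, G.Adj v.1 w
    | Sum.inr _, Sum.inr _ => False
  symm := by
    refine ⟨?_⟩
    rintro (u | u) (v | v) h
    · exact h.symm
    · exact h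
    · exact h
    · exact h
  loopless := by
    refine ⟨?_⟩
    rintro (u | u) h
    · exact G.loopless.irrefl u.1 h
    · exact h

/-- The planets of the contracted galactic graph: the surviving copies of planets. -/
def contractPlanets {V : Type*} (P W : Set V) : Set ({v : V // v ∉ W} ⊕ Unit) :=
  {x | ∃ u : {v : V // v ∉ W}, u.1 ∈ P ∧ x = Sum.inl u}

/-- A subset of `V ∖ W` viewed inside the contracted vertex set. -/
def liftSet {V : Type*} (W X : Set V) : Set ({v : V // v ∉ W} ⊕ Unit) :=
  {x | ∃ u : {v : V // v ∉ W}, u.1 ∈ X ∧ x = Sum.inl u}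

/-- The infinite grid graph on `ℤ × ℤ`: adjacency is unit `L1` distance. -/
def gridGraph : SimpleGraph (ℤ × ℤ) where
  Adj p q := |p.1 - q.1| + |p.2 - q.2| = 1
  symm := by
    refine ⟨?_⟩
    intro p q h
    rw [abs_sub_comm q.1, abs_sub_comm q.2]
    exact h
  loopless := by
    refine ⟨?_⟩
    intro p h
    simp at h

section GalacticAux

variable {V : Type*} (G : SimpleGraph V) (P : Set V) (b : V)

/-- Two positions are "separated": if both are planets they are distinct and non-adjacent. -/
def GSep (p q : V) : Prop := p ∈ P → q ∈ P → p ≠ q ∧ ¬ G.Adj p q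

/-- Unfolded form of distance-1 galactic independence of a configuration. -/
def GIndep {n : ℕ} (c : Fin n → V) : Prop := ∀ i j : Fin n, i ≠ j → GSep G P (c i) (c j)

/-- No agent is in the open neighborhood of `b`. -/
def GClean {n : ℕ} (c : Fin n → V) : Prop := ∀ i, ¬ G.Adj b (c i)

lemma gsep_symm {p q : V} (h : GSep G P p q) : GSep G P q p := by
  intro hq hp
  obtain ⟨h1, h2⟩ := h hp hq
  exact ⟨Ne.symm h1, fun ha => h2 ha.symm⟩

lemma gsep_of_left_not_mem {p q : V} (h : p ∉ P) : GSep G P p q := fun hp => absurd hp h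

lemma gsep_of_right_not_mem {p q : V} (h : q ∉ P) : GSep G P p q := fun _ hq => absurd hq h

lemma galIndep_iff {n : ℕ} (c : Fin n → V) : GalIndep G P 1 c ↔ GIndep G P c := by
  constructor
  · intro h i j hij hi hj
    have h2 := h i j hij hi hj
    constructor
    · intro he
      have : (⟨c i, hi⟩ : P) = ⟨c j, hj⟩ := Subtype.ext he
      rw [this] at h2
      simp [SimpleGraph.edist_self] at h2
    · intro hadj
      have : (G.induce P).Adj ⟨c i, hi⟩ ⟨c j, hj⟩ := by
        simp only [comap_adj, Function.Embedding.coe_subtype]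
        exact hadj
      rw [(SimpleGraph.edist_eq_one_iff_adj).mpr this] at h2
      simp at h2
  · intro h i j hij hi hj
    obtain ⟨h1, h2⟩ := h i j hij hi hj
    by_contra hlt
    push_neg at hlt
    have hle : (G.induce P).edist ⟨c i, hi⟩ ⟨c j, hj⟩ ≤ 1 := by simpa using hlt
    rcases lt_or_eq_of_le hle with hlt1 | heq
    · rw [ENat.lt_one_iff_eq_zero, SimpleGraph.edist_eq_zero_iff] at hlt1
      exact h1 (congrArg Subtype.val hlt1)
    · rw [SimpleGraph.edist_eq_one_iff_adj] at heq
      simp only [comap_adj, Function.Embedding.coe_subtype] at heq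
      exact h2 heq

lemma gindep_comp {n : ℕ} {c : Fin n → V} (h : GIndep G P c) (g : Fin n → Fin n)
    (hg : Function.Injective g) : GIndep G P (c ∘ g) := by
  intro i j hij
  exact h (g i) (g j) (fun he => hij (hg he))

section Matching

variable {n : ℕ} (u t : Fin n → V)

/-- Matching legality: each agent either moves within a closed neighborhood to its target,
or both its source and target are in `N(b)` (it can travel through `b`). -/
def OkM : Prop := ∀ i, (G.Adj b (u i) ∧ G.Adj b (t i)) ∨ t i = u i ∨ G.Adj (u i) (t i)

/-- The "TT" agents: source and target both in `N(b)`. -/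
def isTT (i : Fin n) : Prop := G.Adj b (u i) ∧ G.Adj b (t i)

/-- The "TF" agents: source in `N(b)`, target not. -/
def isTF (i : Fin n) : Prop := G.Adj b (u i) ∧ ¬ G.Adj b (t i)

/-- The "FT" agents: target in `N(b)`, source not. -/
def isFT (i : Fin n) : Prop := ¬ G.Adj b (u i) ∧ G.Adj b (t i)

/-- Conflict arc: `a`'s target is equal or adjacent (within planets) to `c`'s source. -/
def Arc (a c : Fin n) : Prop :=
  a ≠ c ∧ ¬ isTT G b u t a ∧ ¬ isTT G b u t c ∧
    t a ∈ P ∧ u c ∈ P ∧ (t a = u c ∨ G.Adj (t a) (u c))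

lemma isTF_congr {w w' : Fin n → V} {i : Fin n} (h : w i = w' i) :
    isTF G b u w i → isTF G b u w' i := fun hh => ⟨hh.1, h ▸ hh.2⟩

lemma isFT_congr {w w' : Fin n → V} {i : Fin n} (h : w i = w' i) :
    isFT G b u w i → isFT G b u w' i := fun hh => ⟨hh.1, h ▸ hh.2⟩

/-- No conflict path from a TF agent to an FT agent. -/
def NoPath : Prop :=
  ∀ o f, isTF G b u t o → isFT G b u t f → ¬ Relation.ReflTransGen (Arc G P b u t) o f

end Matching

end GalacticAux
section GalacticRot

variable {V : Type*} (G : SimpleGraph V) (P : Set V) (b : V)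

lemma rtg_path {α : Type*} {r : α → α → Prop} {a c : α} (h : Relation.ReflTransGen r a c) :
    ∃ (k : ℕ) (p : ℕ → α), p 0 = a ∧ p k = c ∧ ∀ i < k, r (p i) (p (i + 1)) := by
  induction h with
  | refl => exact ⟨0, fun _ => a, rfl, rfl, fun i hi => absurd hi (Nat.not_lt_zero i)⟩
  | @tail d e hab hbc ih =>
      obtain ⟨k, p, h0, hk, hstep⟩ := ih
      refine ⟨k + 1, fun i => if i ≤ k then p i else e, by simp [h0], by simp, ?_⟩
      intro i hi
      rcases Nat.lt_or_ge i k with h1 | h1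
      · simp only [if_pos (Nat.le_of_lt h1), if_pos (Nat.succ_le_of_lt h1)]
        exact hstep i h1
      · have hik : i = k := by omega
        subst hik
        simp only [if_pos (le_refl i), if_neg (by omega : ¬ i + 1 ≤ i)]
        rw [hk]; exact hbc

lemma exists_good_matching {n : ℕ} (u x : Fin n → V)
    (hmv : ∀ i, x i = u i ∨ G.Adj (u i) (x i)) :
    ∃ σ : Equiv.Perm (Fin n), OkM G b u (x ∘ σ) ∧ NoPath G P b u (x ∘ σ) := by
  classical
  set μ : Equiv.Perm (Fin n) → ℕ := fun σ =>
    (Finset.univ.filter (fun i => isTF G b u (x ∘ σ) i)).card +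
    (Finset.univ.filter (fun i => isFT G b u (x ∘ σ) i)).card with hμ
  suffices H : ∀ (N : ℕ) (σ : Equiv.Perm (Fin n)), OkM G b u (x ∘ σ) → μ σ ≤ N →
      ∃ σ' : Equiv.Perm (Fin n), OkM G b u (x ∘ σ') ∧ NoPath G P b u (x ∘ σ') by
    refine H (μ (Equiv.refl _)) (Equiv.refl _) ?_ le_rfl
    intro i
    right
    simpa using hmv i
  intro N
  induction N with
  | zero =>
      intro σ hOk hle
      by_cases hNP : NoPath G P b u (x ∘ σ)
      · exact ⟨σ, hOk, hNP⟩
      · exfalso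
        simp only [NoPath, not_forall, not_not] at hNP
        obtain ⟨o, f, hTF, hFT, -⟩ := hNP
        have ho : o ∈ Finset.univ.filter (fun i => isTF G b u (x ∘ σ) i) := by
          simp [hTF]
        have : 0 < μ σ := by
          have := Finset.card_pos.mpr ⟨o, ho⟩
          simp only [hμ]
          omega
        omega
  | succ N IH =>
      intro σ hOk hle
      by_cases hNP : NoPath G P b u (x ∘ σ)
      · exact ⟨σ, hOk, hNP⟩
      simp only [NoPath, not_forall, not_not] at hNP
      obtain ⟨o₁, f₁, hTF₁, hFT₁, hrtg⟩ := hNP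
      set t : Fin n → V := x ∘ σ with ht
      -- minimal-length conflict path from a TF agent to an FT agent
      set PK : ℕ → Prop := fun k => ∃ (o f : Fin n) (p : ℕ → Fin n),
        isTF G b u t o ∧ isFT G b u t f ∧ p 0 = o ∧ p k = f ∧
        ∀ i < k, Arc G P b u t (p i) (p (i + 1)) with hPK
      have hex : ∃ k, PK k := by
        obtain ⟨k, p, h0, hk, hstep⟩ := rtg_path hrtg
        exact ⟨k, o₁, f₁, p, hTF₁, hFT₁, h0, hk, hstep⟩
      set k₀ := Nat.find hex with hk₀
      obtain ⟨o, f, p, hTF, hFT, hp0, hpk, harc⟩ := Nat.find_spec hex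
      rw [← hk₀] at hpk harc
      have hmin : ∀ k < k₀, ¬ PK k := fun k hk => Nat.find_min hex hk
      have hk1 : 1 ≤ k₀ := by
        by_contra h
        have hk0 : k₀ = 0 := by omega
        rw [hk0] at hpk
        rw [hp0] at hpk
        exact hFT.1 (hpk ▸ hTF.1)
      -- injectivity of the minimal path
      have hinj2 : ∀ i j, i < j → j ≤ k₀ → p i ≠ p j := by
        intro i j hij hj he
        have hlt : k₀ - (j - i) < k₀ := by omega
        apply hmin _ hlt
        refine ⟨o, f, fun s => if s ≤ i then p s else p (s + (j - i)), hTF, hFT, ?_, ?_, ?_⟩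
        · show (if 0 ≤ i then p 0 else p (0 + (j - i))) = o
          simp [hp0]
        · show (if k₀ - (j - i) ≤ i then p (k₀ - (j - i)) else p (k₀ - (j - i) + (j - i))) = f
          by_cases hcase : k₀ - (j - i) ≤ i
          · rw [if_pos hcase, (by omega : k₀ - (j - i) = i), he, (by omega : j = k₀)]
            exact hpk
          · rw [if_neg hcase, (by omega : k₀ - (j - i) + (j - i) = k₀)]
            exact hpk
        · intro s hs
          show Arc G P b u t (if s ≤ i then p s else p (s + (j - i)))
            (if s + 1 ≤ i then p (s + 1) else p (s + 1 + (j - i)))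
          by_cases h1 : s + 1 ≤ i
          · rw [if_pos (by omega : s ≤ i), if_pos h1]
            exact harc s (by omega)
          · rw [if_neg h1]
            by_cases h3 : s ≤ i
            · have hsi : s = i := by omega
              subst hsi
              rw [if_pos (le_refl s), he, (by omega : s + 1 + (j - s) = j + 1)]
              exact harc j (by omega)
            · rw [if_neg h3, (by omega : s + 1 + (j - i) = s + (j - i) + 1)]
              exact harc (s + (j - i)) (by omega)
      have hinj : ∀ i j, i ≤ k₀ → j ≤ k₀ → p i = p j → i = j := by
        intro i j hi hj he
        rcases Nat.lt_trichotomy i j with h | h | h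
        · exact absurd he (hinj2 i j h hj)
        · exact h
        · exact absurd he.symm (hinj2 j i h hi)
      -- interior agents are not TF and not FT
      have hnotTF : ∀ j, 0 < j → j ≤ k₀ → ¬ isTF G b u t (p j) := by
        intro j hj0 hjk hTFj
        by_cases hjlt : j < k₀
        · refine hmin (k₀ - j) (by omega) ⟨p j, f, fun s => p (s + j), hTFj, hFT, ?_, ?_, ?_⟩
          · show p (0 + j) = p j
            rw [Nat.zero_add]
          · show p (k₀ - j + j) = f
            rw [(by omega : k₀ - j + j = k₀)]; exact hpk
          · intro i hi
            show Arc G P b u t (p (i + j)) (p (i + 1 + j))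
            rw [(by omega : i + 1 + j = i + j + 1)]
            exact harc (i + j) (by omega)
        · have hjk0 : j = k₀ := by omega
          subst hjk0
          rw [hpk] at hTFj
          exact hFT.1 hTFj.1
      have hnotFT : ∀ j, j < k₀ → ¬ isFT G b u t (p j) := by
        intro j hjk hFTj
        by_cases hj0 : 0 < j
        · exact hmin j hjk ⟨o, p j, p, hTF, hFTj, hp0, rfl, fun i hi => harc i (by omega)⟩
        · have : j = 0 := by omega
          subst this
          rw [hp0] at hFTj
          exact hFTj.1 hTF.1
      have hnTT : ∀ j ≤ k₀, ¬ isTT G b u t (p j) := by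
        intro j hj
        by_cases hjlt : j < k₀
        · exact (harc j hjlt).2.1
        · have : j = k₀ := by omega
          subst this
          have := harc (k₀ - 1) (by omega)
          have he : k₀ - 1 + 1 = k₀ := by omega
          rw [he] at this
          exact this.2.2.1
      -- interior agents are FF
      have hFF : ∀ j, 0 < j → j < k₀ → ¬ G.Adj b (u (p j)) ∧ ¬ G.Adj b (t (p j)) := by
        intro j h0 hk
        constructor
        · intro hadj
          by_cases hbt : G.Adj b (t (p j))
          · exact hnTT j (by omega) ⟨hadj, hbt⟩
          · exact hnotTF j h0 (by omega) ⟨hadj, hbt⟩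
        · intro hadj
          by_cases hbu : G.Adj b (u (p j))
          · exact hnTT j (by omega) ⟨hbu, hadj⟩
          · exact hnotFT j hk ⟨hbu, hadj⟩
      -- build the rotation permutation
      set l : List (Fin n) := List.ofFn (fun s : Fin (k₀ + 1) => p s) with hl
      have hlen : l.length = k₀ + 1 := by simp [hl]
      have hnd : l.Nodup := by
        rw [hl, List.nodup_ofFn]
        intro s₁ s₂ hss
        exact Fin.ext (hinj s₁ s₂ (Nat.lt_succ_iff.mp s₁.isLt) (Nat.lt_succ_iff.mp s₂.isLt) hss)
      have hget : ∀ (s : ℕ) (hs : s < l.length), l[s]'hs = p s := by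
        intro s hs
        simp only [hl, List.getElem_ofFn]
      have hmem : ∀ y, y ∈ l ↔ ∃ s, s ≤ k₀ ∧ p s = y := by
        intro y
        rw [hl, List.mem_ofFn]
        constructor
        · rintro ⟨s, rfl⟩
          exact ⟨s, Nat.lt_succ_iff.mp s.isLt, rfl⟩
        · rintro ⟨s, hs, rfl⟩
          exact ⟨⟨s, by omega⟩, rfl⟩
      set d : Equiv.Perm (Fin n) := (l.formPerm)⁻¹ with hd
      have key1 : ∀ j, 1 ≤ j → j ≤ k₀ → d (p j) = p (j - 1) := by
        intro j h1 h2
        rw [hd, Equiv.Perm.inv_eq_iff_eq]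
        have hfp := List.formPerm_apply_lt_getElem l hnd (j - 1) (by rw [hlen]; omega)
        simp only [hget] at hfp
        rw [(by omega : j - 1 + 1 = j)] at hfp
        exact hfp.symm
      have key0 : d (p 0) = p k₀ := by
        rw [hd, Equiv.Perm.inv_eq_iff_eq]
        have hfp := List.formPerm_apply_getElem l hnd k₀ (by rw [hlen]; omega)
        simp only [hget, hlen, Nat.mod_self] at hfp
        exact hfp.symm
      have keyout : ∀ i, (∀ s, s ≤ k₀ → p s ≠ i) → d i = i := by
        intro i hi
        rw [hd, Equiv.Perm.inv_eq_iff_eq]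
        refine (List.formPerm_apply_of_notMem ?_).symm
        rw [hmem]
        rintro ⟨s, hs, he⟩
        exact hi s hs he
      set σ' : Equiv.Perm (Fin n) := d.trans σ with hσ'
      have ht' : ∀ i, (x ∘ σ') i = t (d i) := by
        intro i
        simp [hσ', ht]
      -- legality of the new matching
      have hOk' : OkM G b u (x ∘ σ') := by
        intro i
        by_cases hon : ∃ s, s ≤ k₀ ∧ p s = i
        · obtain ⟨s, hs, rfl⟩ := hon
          rcases Nat.eq_zero_or_pos s with hs0 | hs1
          · subst hs0
            left
            rw [ht' (p 0), key0]
            exact ⟨hp0 ▸ hTF.1, hpk ▸ hFT.2⟩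
          · right
            rw [ht' (p s), key1 s hs1 hs]
            have := harc (s - 1) (by omega)
            rw [(by omega : s - 1 + 1 = s)] at this
            rcases this.2.2.2.2.2 with he | ha
            · left; exact he
            · right; exact ha.symm
        · push_neg at hon
          rw [show (x ∘ σ') i = t i by rw [ht' i, keyout i hon]]
          exact hOk i
      -- the measure strictly decreases
      have hTFsub : (Finset.univ.filter (fun i => isTF G b u (x ∘ σ') i)) ⊆
          (Finset.univ.filter (fun i => isTF G b u t i)).erase o := by
        intro i hi
        simp only [Finset.mem_filter, Finset.mem_univ, true_and] at hi
        by_cases hon : ∃ s, s ≤ k₀ ∧ p s = i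
        · exfalso
          obtain ⟨s, hs, rfl⟩ := hon
          rcases Nat.eq_zero_or_pos s with hs0 | hs1
          · subst hs0
            have : ¬ G.Adj b ((x ∘ σ') (p 0)) := hi.2
            rw [ht' (p 0), key0] at this
            exact this (hpk ▸ hFT.2)
          · have hadj : G.Adj b (u (p s)) := hi.1
            by_cases hsk : s < k₀
            · exact (hFF s hs1 hsk).1 hadj
            · have : s = k₀ := by omega
              subst this
              exact hFT.1 (hpk ▸ hadj)
        · push_neg at hon
          have hti : (x ∘ σ') i = t i := by rw [ht' i, keyout i hon]
          rw [Finset.mem_erase]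
          refine ⟨?_, ?_⟩
          · intro he
            exact hon 0 (by omega) (by rw [hp0, he])
          · simp only [Finset.mem_filter, Finset.mem_univ, true_and]
            exact isTF_congr G b u hti hi
      have hFTsub : (Finset.univ.filter (fun i => isFT G b u (x ∘ σ') i)) ⊆
          (Finset.univ.filter (fun i => isFT G b u t i)).erase f := by
        intro i hi
        simp only [Finset.mem_filter, Finset.mem_univ, true_and] at hi
        by_cases hon : ∃ s, s ≤ k₀ ∧ p s = i
        · exfalso
          obtain ⟨s, hs, rfl⟩ := hon
          rcases Nat.eq_zero_or_pos s with hs0 | hs1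
          · subst hs0
            exact hi.1 (hp0 ▸ hTF.1)
          · have hadj : G.Adj b ((x ∘ σ') (p s)) := hi.2
            rw [ht' (p s), key1 s hs1 hs] at hadj
            rcases Nat.eq_zero_or_pos (s - 1) with hz | hpos
            · rw [hz, hp0] at hadj
              exact hTF.2 hadj
            · exact (hFF (s - 1) hpos (by omega)).2 hadj
        · push_neg at hon
          have hti : (x ∘ σ') i = t i := by rw [ht' i, keyout i hon]
          rw [Finset.mem_erase]
          refine ⟨?_, ?_⟩
          · intro he
            exact hon k₀ (le_refl _) (by rw [hpk, he])
          · simp only [Finset.mem_filter, Finset.mem_univ, true_and]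
            exact isFT_congr G b u hti hi
      have hoin : o ∈ Finset.univ.filter (fun i => isTF G b u t i) := by simp [hTF]
      have hfin : f ∈ Finset.univ.filter (fun i => isFT G b u t i) := by simp [hFT]
      have hcard1 : (Finset.univ.filter (fun i => isTF G b u (x ∘ σ') i)).card ≤
          (Finset.univ.filter (fun i => isTF G b u t i)).card - 1 := by
        calc _ ≤ ((Finset.univ.filter (fun i => isTF G b u t i)).erase o).card :=
              Finset.card_le_card hTFsub
          _ = _ := Finset.card_erase_of_mem hoin
      have hcard2 : (Finset.univ.filter (fun i => isFT G b u (x ∘ σ') i)).card ≤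
          (Finset.univ.filter (fun i => isFT G b u t i)).card - 1 := by
        calc _ ≤ ((Finset.univ.filter (fun i => isFT G b u t i)).erase f).card :=
              Finset.card_le_card hFTsub
          _ = _ := Finset.card_erase_of_mem hfin
      have hpos1 : 0 < (Finset.univ.filter (fun i => isTF G b u t i)).card :=
        Finset.card_pos.mpr ⟨o, hoin⟩
      have hpos2 : 0 < (Finset.univ.filter (fun i => isFT G b u t i)).card :=
        Finset.card_pos.mpr ⟨f, hfin⟩
      have hμσ : μ σ = (Finset.univ.filter (fun i => isTF G b u t i)).card +
          (Finset.univ.filter (fun i => isFT G b u t i)).card := rfl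
      have hdec : μ σ' < μ σ := by
        have hμσ' : μ σ' = (Finset.univ.filter (fun i => isTF G b u (x ∘ σ') i)).card +
            (Finset.univ.filter (fun i => isFT G b u (x ∘ σ') i)).card := rfl
        omega
      exact IH σ' hOk' (by omega)

end GalacticRot
section GalacticSeg

variable {V : Type*} (G : SimpleGraph V) (P : Set V) (b : V)

lemma segment_exists (hb : b ∉ P) {n : ℕ} (u x : Fin n → V)
    (hu : GIndep G P u) (hx : GIndep G P x)
    (hmv : ∀ i, x i = u i ∨ G.Adj (u i) (x i)) :
    ∃ (σ : Equiv.Perm (Fin n)) (R : ℕ → Fin n → V),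
      R 0 = u ∧ R 6 = x ∘ σ ∧
      (∀ k < 6, ∀ i, R (k + 1) i = R k i ∨ G.Adj (R k i) (R (k + 1) i)) ∧
      (∀ k ≤ 6, GIndep G P (R k)) ∧
      (∀ k ≤ 6, k % 2 = 1 → GClean G b (R k)) := by
  classical
  obtain ⟨σ, hOk, hNP⟩ := exists_good_matching G P b u x hmv
  set t : Fin n → V := x ∘ σ with ht
  set D : Fin n → Prop := fun c => ∃ o, isTF G b u t o ∧
    Relation.ReflTransGen (Arc G P b u t) o c with hD
  have hDTF : ∀ i, isTF G b u t i → D i := fun i h => ⟨i, h, Relation.ReflTransGen.refl⟩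
  have hDcl : ∀ a c, D a → Arc G P b u t a c → D c := by
    rintro a c ⟨o, ho, hr⟩ harc
    exact ⟨o, ho, hr.tail harc⟩
  have hDFT : ∀ i, isFT G b u t i → ¬ D i := by
    rintro i hf ⟨o, ho, hr⟩
    exact hNP o i ho hf hr
  have hindx : GIndep G P t := gindep_comp G P hx σ σ.injective
  have hmvOk : ∀ i, ¬ isTT G b u t i → (t i = u i ∨ G.Adj (u i) (t i)) :=
    fun i hn => (hOk i).resolve_left hn
  have hDnotNb : ∀ i, ¬ isTT G b u t i → D i → ¬ G.Adj b (t i) := by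
    intro i hTTn hDi hadj
    by_cases hbu : G.Adj b (u i)
    · exact hTTn ⟨hbu, hadj⟩
    · exact hDFT i ⟨hbu, hadj⟩ hDi
  have hNDnotNb : ∀ i, ¬ isTT G b u t i → ¬ D i → ¬ G.Adj b (u i) := by
    intro i hTTn hDi hadj
    by_cases hbt : G.Adj b (t i)
    · exact hTTn ⟨hadj, hbt⟩
    · exact hDi (hDTF i ⟨hadj, hbt⟩)
  have hFTt : ∀ i, ¬ isTT G b u t i → ¬ isFT G b u t i → ¬ G.Adj b (t i) := by
    intro i h1 h2 hadj
    by_cases hbu : G.Adj b (u i)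
    · exact h1 ⟨hbu, hadj⟩
    · exact h2 ⟨hbu, hadj⟩
  have hcross : ∀ i j, i ≠ j → ¬ isTT G b u t i → D i → ¬ isTT G b u t j → ¬ D j →
      GSep G P (t i) (u j) := by
    intro i j hij hTTi hDi hTTj hDj
    intro hp hq
    by_contra hns
    have hor : t i = u j ∨ G.Adj (t i) (u j) := by
      by_cases he : t i = u j
      · exact Or.inl he
      · right
        by_contra hna
        exact hns ⟨he, hna⟩
    exact hDj (hDcl i j hDi ⟨hij, hTTi, hTTj, hp, hq, hor⟩)
  set R : ℕ → Fin n → V := fun k i =>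
    if k = 0 then u i
    else if k = 1 then (if G.Adj b (u i) then b else u i)
    else if k = 2 then (if isTT G b u t i then b else u i)
    else if k = 3 then (if isTT G b u t i then b else if D i then t i else u i)
    else if k = 4 then (if isTT G b u t i then b else t i)
    else if k = 5 then (if isTT G b u t i ∨ isFT G b u t i then b else t i)
    else t i with hRdef
  have hR0 : ∀ i, R 0 i = u i := fun i => by simp [hRdef]
  have hR1 : ∀ i, R 1 i = if G.Adj b (u i) then b else u i := fun i => by simp [hRdef]
  have hR2 : ∀ i, R 2 i = if isTT G b u t i then b else u i := fun i => by norm_num [hRdef]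
  have hR3 : ∀ i, R 3 i = if isTT G b u t i then b else if D i then t i else u i :=
    fun i => by norm_num [hRdef]
  have hR4 : ∀ i, R 4 i = if isTT G b u t i then b else t i := fun i => by norm_num [hRdef]
  have hR5 : ∀ i, R 5 i = if isTT G b u t i ∨ isFT G b u t i then b else t i :=
    fun i => by norm_num [hRdef]
  have hR6 : ∀ i, R 6 i = t i := fun i => by norm_num [hRdef]
  refine ⟨σ, R, funext hR0, funext hR6, ?_, ?_, ?_⟩
  · -- moves
    intro k hk i
    interval_cases k
    · rw [hR0, hR1]
      by_cases hbu : G.Adj b (u i)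
      · rw [if_pos hbu]; exact Or.inr hbu.symm
      · rw [if_neg hbu]; exact Or.inl rfl
    · rw [hR1, hR2]
      by_cases hTT : isTT G b u t i
      · rw [if_pos hTT, if_pos hTT.1]; exact Or.inl rfl
      · rw [if_neg hTT]
        by_cases hbu : G.Adj b (u i)
        · rw [if_pos hbu]; exact Or.inr hbu
        · rw [if_neg hbu]; exact Or.inl rfl
    · rw [hR2, hR3]
      by_cases hTT : isTT G b u t i
      · rw [if_pos hTT, if_pos hTT]; exact Or.inl rfl
      · rw [if_neg hTT, if_neg hTT]
        by_cases hDi : D i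
        · rw [if_pos hDi]
          rcases hmvOk i hTT with he | ha
          · exact Or.inl he
          · exact Or.inr ha
        · rw [if_neg hDi]; exact Or.inl rfl
    · rw [hR3, hR4]
      by_cases hTT : isTT G b u t i
      · rw [if_pos hTT, if_pos hTT]; exact Or.inl rfl
      · rw [if_neg hTT, if_neg hTT]
        by_cases hDi : D i
        · rw [if_pos hDi]; exact Or.inl rfl
        · rw [if_neg hDi]
          rcases hmvOk i hTT with he | ha
          · exact Or.inl he
          · exact Or.inr ha
    · rw [hR4, hR5]
      by_cases hTT : isTT G b u t i
      · rw [if_pos hTT, if_pos (Or.inl hTT)]; exact Or.inl rfl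
      · rw [if_neg hTT]
        by_cases hFT : isFT G b u t i
        · rw [if_pos (Or.inr hFT)]; exact Or.inr hFT.2.symm
        · rw [if_neg (by tauto : ¬ (isTT G b u t i ∨ isFT G b u t i))]; exact Or.inl rfl
    · rw [hR5, hR6]
      by_cases hTF : isTT G b u t i ∨ isFT G b u t i
      · rw [if_pos hTF]
        rcases hTF with h | h
        · exact Or.inr h.2
        · exact Or.inr h.2
      · rw [if_neg hTF]; exact Or.inl rfl
  · -- independence
    have sepb_l : ∀ q : V, GSep G P b q := fun q => gsep_of_left_not_mem G P hb
    have sepb_r : ∀ q : V, GSep G P q b := fun q => gsep_of_right_not_mem G P hb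
    intro k hk i j hij
    interval_cases k
    · rw [hR0, hR0]; exact hu i j hij
    · rw [hR1, hR1]
      by_cases h1 : G.Adj b (u i) <;> by_cases h2 : G.Adj b (u j) <;>
        simp only [if_pos, if_neg, h1, h2, if_true, if_false]
      · exact sepb_l _
      · exact sepb_l _
      · exact sepb_r _
      · exact hu i j hij
    · rw [hR2, hR2]
      by_cases h1 : isTT G b u t i <;> by_cases h2 : isTT G b u t j <;>
        simp only [h1, h2, if_true, if_false]
      · exact sepb_l _
      · exact sepb_l _
      · exact sepb_r _
      · exact hu i j hij
    · rw [hR3, hR3]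
      by_cases h1 : isTT G b u t i
      · rw [if_pos h1]; exact sepb_l _
      · rw [if_neg h1]
        by_cases h2 : isTT G b u t j
        · rw [if_pos h2]
          by_cases hDi : D i
          · rw [if_pos hDi]; exact sepb_r _
          · rw [if_neg hDi]; exact sepb_r _
        · rw [if_neg h2]
          by_cases hDi : D i <;> by_cases hDj : D j
          · rw [if_pos hDi, if_pos hDj]; exact hindx i j hij
          · rw [if_pos hDi, if_neg hDj]; exact hcross i j hij h1 hDi h2 hDj
          · rw [if_neg hDi, if_pos hDj]
            exact gsep_symm G P (hcross j i (Ne.symm hij) h2 hDj h1 hDi)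
          · rw [if_neg hDi, if_neg hDj]; exact hu i j hij
    · rw [hR4, hR4]
      by_cases h1 : isTT G b u t i <;> by_cases h2 : isTT G b u t j <;>
        simp only [h1, h2, if_true, if_false]
      · exact sepb_l _
      · exact sepb_l _
      · exact sepb_r _
      · exact hindx i j hij
    · rw [hR5, hR5]
      by_cases h1 : isTT G b u t i ∨ isFT G b u t i <;>
        by_cases h2 : isTT G b u t j ∨ isFT G b u t j <;>
        simp only [h1, h2, if_true, if_false]
      · exact sepb_l _
      · exact sepb_l _
      · exact sepb_r _
      · exact hindx i j hij
    · rw [hR6, hR6]; exact hindx i j hij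
  · -- cleanliness at odd times
    intro k hk hodd i
    interval_cases k
    · exact absurd hodd (by norm_num)
    · rw [hR1]
      by_cases hbu : G.Adj b (u i)
      · rw [if_pos hbu]; exact G.irrefl
      · rw [if_neg hbu]; exact hbu
    · exact absurd hodd (by norm_num)
    · rw [hR3]
      by_cases h1 : isTT G b u t i
      · rw [if_pos h1]; exact G.irrefl
      · rw [if_neg h1]
        by_cases hDi : D i
        · rw [if_pos hDi]; exact hDnotNb i h1 hDi
        · rw [if_neg hDi]; exact hNDnotNb i h1 hDi
    · exact absurd hodd (by norm_num)
    · rw [hR5]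
      by_cases h1 : isTT G b u t i ∨ isFT G b u t i
      · rw [if_pos h1]; exact G.irrefl
      · rw [if_neg h1]
        push_neg at h1
        exact hFTt i h1.1 h1.2
    · exact absurd hodd (by norm_num)

end GalacticSeg
section GalacticGlobal

variable {V : Type*} (G : SimpleGraph V) (P : Set V) (b : V)

lemma global_plan (hb : b ∉ P) {n : ℕ} (ℓ : ℕ) (Q : ℕ → Fin n → V)
    (hind : ∀ k ≤ ℓ, GIndep G P (Q k))
    (hmv : ∀ k < ℓ, ∀ i, Q (k + 1) i = Q k i ∨ G.Adj (Q k i) (Q (k + 1) i)) :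
    ∀ tt, tt ≤ ℓ → ∃ (R : ℕ → Fin n → V) (σ : Equiv.Perm (Fin n)),
      R 0 = Q 0 ∧ R (6 * tt) = Q tt ∘ σ ∧
      (∀ k ≤ 6 * tt, GIndep G P (R k)) ∧
      (∀ k < 6 * tt, ∀ i, R (k + 1) i = R k i ∨ G.Adj (R k i) (R (k + 1) i)) ∧
      (∀ k ≤ 6 * tt, k % 2 = 1 → GClean G b (R k)) := by
  intro tt
  induction tt with
  | zero =>
      intro _
      refine ⟨fun _ => Q 0, Equiv.refl _, rfl, ?_, ?_, ?_, ?_⟩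
      · funext i; simp
      · intro k hk
        have hk0 : k = 0 := by omega
        subst hk0
        exact hind 0 (by omega)
      · intro k hk
        exact absurd hk (by omega)
      · intro k hk hodd
        exact absurd hodd (by omega)
  | succ m IH =>
      intro hm
      obtain ⟨R, σ, hRz, hRe, hRind, hRmv, hRcl⟩ := IH (by omega)
      have hu : GIndep G P (Q m ∘ σ) := gindep_comp G P (hind m (by omega)) σ σ.injective
      have hx : GIndep G P (Q (m + 1) ∘ σ) := gindep_comp G P (hind (m + 1) hm) σ σ.injective
      have hmv' : ∀ i, (Q (m + 1) ∘ σ) i = (Q m ∘ σ) i ∨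
          G.Adj ((Q m ∘ σ) i) ((Q (m + 1) ∘ σ) i) := fun i => hmv m (by omega) (σ i)
      obtain ⟨σ₂, Seg, hS0, hS6, hSmv, hSind, hScl⟩ :=
        segment_exists G P b hb (Q m ∘ σ) (Q (m + 1) ∘ σ) hu hx hmv'
      have hglue : Seg 0 = R (6 * m) := by rw [hS0, hRe]
      set R' : ℕ → Fin n → V := fun k => if k ≤ 6 * m then R k else Seg (k - 6 * m) with hR'def
      have hR'k : ∀ k, R' k = if k ≤ 6 * m then R k else Seg (k - 6 * m) := fun k => rfl
      refine ⟨R', σ₂.trans σ, ?_, ?_, ?_, ?_, ?_⟩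
      · rw [hR'k, if_pos (by omega : 0 ≤ 6 * m)]
        exact hRz
      · rw [hR'k, if_neg (by omega : ¬ 6 * (m + 1) ≤ 6 * m),
          (by omega : 6 * (m + 1) - 6 * m = 6), hS6]
        funext i
        simp [Equiv.trans_apply]
      · intro k hk
        by_cases hc : k ≤ 6 * m
        · rw [hR'k, if_pos hc]; exact hRind k hc
        · rw [hR'k, if_neg hc]; exact hSind (k - 6 * m) (by omega)
      · intro k hk i
        rw [hR'k, hR'k]
        by_cases hc1 : k + 1 ≤ 6 * m
        · rw [if_pos hc1, if_pos (by omega : k ≤ 6 * m)]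
          exact hRmv k (by omega) i
        · rw [if_neg hc1]
          by_cases hc2 : k ≤ 6 * m
          · have hk6 : k = 6 * m := by omega
            subst hk6
            rw [if_pos hc2, (by omega : 6 * m + 1 - 6 * m = 1)]
            have h9 := hSmv 0 (by omega) i
            rw [hglue] at h9
            exact h9
          · rw [if_neg hc2, (by omega : k + 1 - 6 * m = (k - 6 * m) + 1)]
            exact hSmv (k - 6 * m) (by omega) i
      · intro k hk hodd
        by_cases hc : k ≤ 6 * m
        · rw [hR'k, if_pos hc]; exact hRcl k hc hodd
        · rw [hR'k, if_neg hc]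
          exact hScl (k - 6 * m) (by omega) (by omega)

end GalacticGlobal
/-- any feasible instance of Galactic 1IUMAPF with a black hole `b` admits a
plan in which no two consecutive configurations both place an agent in the open
neighborhood `N(b)`. -/
theorem exists_plan_nbhd_alternating {V : Type*} [Fintype V] (G : SimpleGraph V)
    (P : Set V) (b : V) (hb : b ∉ P)
    (n : ℕ) (S T : Set V) (hSP : S ⊆ P) (hTP : T ⊆ P)
    (hS : S.ncard = n) (hT : T.ncard = n)
    (hbh : nclSet G (S ∪ T) ⊆ P)
    (hplan : GalPlan G P 1 n S T) :
    ∃ (ℓ : ℕ) (Q : ℕ → Fin n → V),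
      (Set.range (Q 0) = S ∧ Set.range (Q ℓ) = T ∧
        (∀ k ≤ ℓ, GalIndep G P 1 (Q k)) ∧
        (∀ k < ℓ, ∀ i : Fin n, Q (k + 1) i = Q k i ∨ G.Adj (Q k i) (Q (k + 1) i))) ∧
      (∀ t < ℓ, Set.range (Q t) ∩ G.neighborSet b = ∅ ∨
        Set.range (Q (t + 1)) ∩ G.neighborSet b = ∅) := by
  obtain ⟨ℓ, Q, hQ0, hQl, hindG, hmvG⟩ := hplan
  have hind : ∀ k ≤ ℓ, GIndep G P (Q k) := fun k hk => (galIndep_iff G P _).mp (hindG k hk)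
  obtain ⟨R, σ, hRz, hRe, hRind, hRmv, hRcl⟩ :=
    global_plan G P b hb ℓ Q hind hmvG ℓ le_rfl
  have hclean_range : ∀ k ≤ 6 * ℓ, k % 2 = 1 → Set.range (R k) ∩ G.neighborSet b = ∅ := by
    intro k hk hodd
    have hcl := hRcl k hk hodd
    apply Set.eq_empty_iff_forall_notMem.mpr
    rintro v ⟨⟨i, rfl⟩, hv⟩
    exact hcl i hv
  refine ⟨6 * ℓ, R, ⟨?_, ?_, ?_, ?_⟩, ?_⟩
  · rw [hRz]; exact hQ0
  · rw [hRe, Function.Surjective.range_comp σ.surjective (Q ℓ)]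
    exact hQl
  · intro k hk
    exact (galIndep_iff G P _).mpr (hRind k hk)
  · exact hRmv
  · intro t ht
    rcases Nat.even_or_odd t with he | ho
    · right
      apply hclean_range (t + 1) (by omega)
      have := Nat.even_iff.mp he
      omega
    · left
      apply hclean_range t (by omega)
      have := Nat.odd_iff.mp ho
      omega
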